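/- If V is a non-periodic rank-one word, then the associated subshift X = {x ∈ {0,1}^ℤ : every finite factor of x is a factor of V} is a perfect subset of {0,1}^ℤ (closed with no isolated points). -/

import Mathlib

/-- A block of `a` ones. -/
def ones (a : ℕ) : List Bool := List.replicate a true

/-- Words over {0,1} that begin and end with 0 (false = 0, true = 1). -/
def InF (v : List Bool) : Prop := v.head? = some false ∧ v.getLast? = some false

/-- `w` is a prefix of the infinite word `V`. -/
def PrefixOf (w : List Bool) (V : ℕ → Bool) : Prop :=
  ∀ i, i < w.length → w.getD i false = V i

/-- Finite stages `v 1^{a 0} v 1^{a 1} v ⋯ v`. -/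
def stage (v : List Bool) (a : ℕ → ℕ) : ℕ → List Bool
  | 0 => v
  | n + 1 => stage v a n ++ ones (a n) ++ v

/-- The infinite word `V` is built from `v`: `V = v 1^{a₁} v 1^{a₂} v ⋯`. -/
def BuiltFrom (V : ℕ → Bool) (v : List Bool) : Prop :=
  ∃ a : ℕ → ℕ, ∀ n, PrefixOf (stage v a n) V

/-- A finite word `w` is built from `v`: `w = v 1^{a₁} v ⋯ v 1^{a_k} v`, `k ≥ 1`. -/
def FBuiltFrom (w v : List Bool) : Prop :=
  ∃ a : List ℕ, a ≠ [] ∧ w = v ++ (a.map fun n => ones n ++ v).flatten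

/-- `A_V`, the set of words in `𝓕` from which `V` is built. -/
def AV (V : ℕ → Bool) : Set (List Bool) := {v | InF v ∧ BuiltFrom V v}

/-- `w` occurs in the infinite word `V` at position `k`. -/
def OccursAt (w : List Bool) (V : ℕ → Bool) (k : ℕ) : Prop :=
  ∀ i, i < w.length → w.getD i false = V (k + i)

/-- `w` is a factor (contiguous subword) of the infinite word `V`. -/
def FactorOfN (w : List Bool) (V : ℕ → Bool) : Prop := ∃ k, OccursAt w V k

/-- `w` occurs in the bi-infinite word `x` at position `k`. -/
def OccursAtZ (w : List Bool) (x : ℤ → Bool) (k : ℤ) : Prop :=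
  ∀ i, i < w.length → w.getD i false = x (k + (i : ℤ))

/-- `w` is a factor of the bi-infinite word `x`. -/
def FactorOfZ (w : List Bool) (x : ℤ → Bool) : Prop := ∃ k, OccursAtZ w x k

/-- The subshift associated to an infinite word `V`. -/
def Subshift (V : ℕ → Bool) : Set (ℤ → Bool) :=
  {x | ∀ w, FactorOfZ w x → FactorOfN w V}

/-- Thue–Morse words: `M 0 = 0`, `M (n+1) = M n ++ complement (M n)`. -/
def M : ℕ → List Bool
  | 0 => [false]
  | n + 1 => M n ++ (M n).map (fun b => !b)

/-- The Thue–Morse sequence: parity of the number of 1's in binary expansion. -/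
def tm (n : ℕ) : Bool := decide (((Nat.digits 2 n).count 1) % 2 = 1)

/-- Rank-two towers for the Thue–Morse sequence. -/
def M2 : ℕ → List Bool × List Bool
  | 0 => ([false], [false])
  | n + 1 =>
    if n % 2 = 1 then ((M2 n).1 ++ [true] ++ (M2 n).2, (M2 n).2 ++ [true] ++ (M2 n).1)
    else ((M2 n).1 ++ [true, true] ++ (M2 n).2, (M2 n).2 ++ (M2 n).1)

open Filter

namespace Stmt11Aux

lemma inF_ne_nil {v : List Bool} (h : InF v) : v ≠ [] := by
  intro hv; rw [hv] at h; simp [InF] at h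

lemma inF_head {v : List Bool} (h : InF v) : v.getD 0 false = false := by
  obtain ⟨h1, -⟩ := h
  cases v with
  | nil => simp at h1
  | cons b t => simp [List.head?] at h1; simp [h1]

lemma stage_length {v : List Bool} {a : ℕ → ℕ} (hv : v ≠ []) (n : ℕ) :
    v.length + n ≤ (stage v a n).length := by
  have hv1 : 1 ≤ v.length := List.length_pos_iff.mpr hv
  induction n with
  | zero => simp [stage]
  | succ n ih => simp only [stage, List.length_append]; omega

lemma stage_eq_append (v : List Bool) (a : ℕ → ℕ) (n : ℕ) :
    ∃ u, stage v a n = u ++ v := by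
  cases n with
  | zero => exact ⟨[], rfl⟩
  | succ n => exact ⟨stage v a n ++ ones (a n), by simp [stage]⟩

lemma occursAt_of_prefix {L w p s : List Bool} {V : ℕ → Bool}
    (hL : PrefixOf L V) (he : L = p ++ (w ++ s)) : OccursAt w V p.length := by
  intro i hi
  have h1 : p.length + i < L.length := by
    rw [he]; simp only [List.length_append]; omega
  have h2 : L.getD (p.length + i) false = w.getD i false := by
    rw [he, List.getD_append_right _ _ _ _ (Nat.le_add_right _ _),
      Nat.add_sub_cancel_left, List.getD_append _ _ _ _ hi]
  rw [← h2]; exact hL _ h1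

lemma occurs_self {v : List Bool} {a : ℕ → ℕ} {V : ℕ → Bool} (hv : v ≠ [])
    (hpre : ∀ n, PrefixOf (stage v a n) V) (n : ℕ) :
    ∃ m, n ≤ m ∧ OccursAt v V m := by
  obtain ⟨u, hu⟩ := stage_eq_append v a n
  refine ⟨u.length, ?_, occursAt_of_prefix (hpre n) (by rw [hu, List.append_nil])⟩
  have h1 := stage_length (a := a) hv n
  have h2 : (stage v a n).length = u.length + v.length := by
    rw [hu]; simp
  omega

lemma long_mem {V : ℕ → Bool} (h1 : (AV V).Infinite) (L : ℕ) :
    ∃ v ∈ AV V, L ≤ v.length := by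
  by_contra hcon
  push_neg at hcon
  exact h1 (Set.Finite.subset (List.finite_length_le Bool L)
    (fun v hv => le_of_lt (hcon v hv)))

lemma occurs_far {V : ℕ → Bool} (h1 : (AV V).Infinite) {w : List Bool}
    (hw : FactorOfN w V) : ∀ M : ℕ, ∃ m, M ≤ m ∧ OccursAt w V m := by
  obtain ⟨k, hk⟩ := hw
  obtain ⟨v, hvA, hvlen⟩ := long_mem h1 (k + w.length)
  obtain ⟨hvF, a, hpre⟩ := hvA
  have hvne : v ≠ [] := inF_ne_nil hvF
  intro M
  obtain ⟨m, hm, hocc⟩ := occurs_self hvne hpre M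
  refine ⟨m + k, le_trans hm (Nat.le_add_right _ _), ?_⟩
  intro i hi
  have hki : k + i < v.length := by omega
  have e1 : w.getD i false = V (k + i) := hk i hi
  have e2 : v.getD (k + i) false = V (k + i) := hpre 0 (k + i) hki
  have e3 : v.getD (k + i) false = V (m + (k + i)) := hocc (k + i) hki
  have e4 : V (m + (k + i)) = V (m + k + i) := by rw [Nat.add_assoc]
  rw [e1, ← e2, e3, e4]

lemma exists_point (V : ℕ → Bool) (w : List Bool)
    (hocc : ∀ M : ℕ, ∃ m, M ≤ m ∧ OccursAt w V m) (c : ℤ) :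
    ∃ y ∈ Subshift V, OccursAtZ w y c := by
  classical
  choose m hm hoc using hocc
  set F : ℕ → ℤ → Bool := fun j i => V ((↑(m j) + (i - c)).toNat) with hF
  set U : Ultrafilter ℕ := Ultrafilter.of atTop with hU
  set y : ℤ → Bool := fun i => if {j | F j i = true} ∈ U then true else false with hy
  have hkey : ∀ i : ℤ, {j | F j i = y i} ∈ U := by
    intro i
    by_cases h : {j | F j i = true} ∈ U
    · have : y i = true := by rw [hy]; simp only [h, if_true]
      rw [this]; exact h
    · have h' : {j | F j i = true}ᶜ ∈ U := Ultrafilter.compl_mem_iff_notMem.mpr h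
      have hyi : y i = false := by rw [hy]; simp only [h, if_false]
      rw [hyi]
      refine Filter.mem_of_superset h' ?_
      intro j hj
      simp only [Set.mem_compl_iff, Set.mem_setOf_eq] at hj ⊢
      exact Bool.not_eq_true _ |>.mp hj
  have hatTop : ∀ J : ℕ, {j | J ≤ j} ∈ U := fun J => (Ultrafilter.of_le atTop) (mem_atTop J)
  refine ⟨y, ?_, ?_⟩
  · -- y ∈ Subshift V
    rintro u ⟨k, hk⟩
    have hbig : ({j | (c - k).toNat ≤ j} ∩
        ⋂ i ∈ Finset.range u.length, {j | F j (k + i) = y (k + i)}) ∈ U := by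
      refine Filter.inter_mem (hatTop _) ?_
      exact (Filter.biInter_finset_mem _).mpr fun i _ => hkey _
    obtain ⟨j, hj⟩ := Ultrafilter.nonempty_of_mem hbig
    obtain ⟨hj1, hj2⟩ := hj
    have hj2' : ∀ i, i < u.length → F j (k + i) = y (k + i) := by
      intro i hi
      exact Set.mem_iInter₂.mp hj2 i (Finset.mem_range.mpr hi)
    have hmj : j ≤ m j := hm j
    have hj1n : (c - k).toNat ≤ j := hj1
    have hpos : 0 ≤ (m j : ℤ) + (k - c) := by omega
    refine ⟨((m j : ℤ) + (k - c)).toNat, ?_⟩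
    intro i hi
    have e1 : u.getD i false = y (k + i) := hk i hi
    have e2 : y (k + i) = F j (k + i) := (hj2' i hi).symm
    have e3 : F j (k + i) = V ((↑(m j) + ((k + i) - c)).toNat) := rfl
    have e4 : (↑(m j) + ((k + (i:ℤ)) - c)).toNat = ((m j : ℤ) + (k - c)).toNat + i := by omega
    rw [e1, e2, e3, e4]
  · -- OccursAtZ w y c
    intro i hi
    have hconst : ∀ j, F j (c + i) = w.getD i false := by
      intro j
      have e : ((↑(m j) + ((c + (i:ℤ)) - c))).toNat = m j + i := by omega
      have e' : F j (c + i) = V ((↑(m j) + ((c + (i:ℤ)) - c)).toNat) := rfl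
      rw [e', e]
      exact (hoc j i hi).symm
    obtain ⟨j, hj⟩ := Ultrafilter.nonempty_of_mem (hkey (c + i))
    have hj' : F j (c + i) = y (c + i) := hj
    rw [← hj', hconst j]

lemma subshift_closed (V : ℕ → Bool) : IsClosed (Subshift V) := by
  have heq : Subshift V = ⋂ w : List Bool, {x : ℤ → Bool | FactorOfZ w x → FactorOfN w V} := by
    ext x; simp [Subshift, Set.mem_iInter]
  rw [heq]
  refine isClosed_iInter fun w => ?_
  by_cases h : FactorOfN w V
  · have : {x : ℤ → Bool | FactorOfZ w x → FactorOfN w V} = Set.univ := by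
      ext x; simp [h]
    rw [this]; exact isClosed_univ
  · have : {x : ℤ → Bool | FactorOfZ w x → FactorOfN w V} = {x | FactorOfZ w x}ᶜ := by
      ext x; simp [h]
    rw [this, isClosed_compl_iff]
    have hset : {x : ℤ → Bool | FactorOfZ w x} =
        ⋃ k : ℤ, ⋂ i ∈ Finset.range w.length,
          {x : ℤ → Bool | x (k + i) = w.getD i false} := by
      ext x
      simp only [Set.mem_setOf_eq, Set.mem_iUnion, Set.mem_iInter, Finset.mem_range]
      constructor
      · rintro ⟨k, hk⟩; exact ⟨k, fun i hi => (hk i hi).symm⟩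
      · rintro ⟨k, hk⟩; exact ⟨k, fun i hi => (hk i hi).symm⟩
    rw [hset]
    refine isOpen_iUnion fun k => ?_
    refine isOpen_biInter_finset fun i _ => ?_
    have hpre : {x : ℤ → Bool | x (k + i) = w.getD i false} =
        (fun x : ℤ → Bool => x (k + (i:ℤ))) ⁻¹' {w.getD i false} := rfl
    rw [hpre]
    exact (continuous_apply (k + (i:ℤ))).isOpen_preimage _ (isOpen_discrete _)

lemma const_periodic {v : List Bool} {a : ℕ → ℕ} {V : ℕ → Bool} (hv : v ≠ [])
    (hpre : ∀ n, PrefixOf (stage v a n) V) (hc : ∀ n, a n = a 0) :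
    ∃ p > 0, ∀ i, V (i + p) = V i := by
  set c := a 0 with hcdef
  have hsw' : ∀ n, stage v a n ++ (ones c ++ v) = v ++ (ones c ++ stage v a n) := by
    intro n
    induction n with
    | zero => show v ++ (ones c ++ v) = v ++ (ones c ++ v); rfl
    | succ n ih =>
      have hst : stage v a (n + 1) = stage v a n ++ ones (a n) ++ v := rfl
      calc stage v a (n+1) ++ (ones c ++ v)
          = (stage v a n ++ (ones c ++ v)) ++ (ones c ++ v) := by
            rw [hst, hc n]; simp only [List.append_assoc]
        _ = (v ++ (ones c ++ stage v a n)) ++ (ones c ++ v) := by rw [ih]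
        _ = v ++ (ones c ++ (stage v a n ++ (ones c ++ v))) := by simp [List.append_assoc]
        _ = v ++ (ones c ++ (v ++ (ones c ++ stage v a n))) := by rw [ih]
        _ = v ++ (ones c ++ stage v a (n+1)) := by
            rw [hst, hc n]; simp only [List.append_assoc]; rw [ih]
  have hsw : ∀ n, stage v a (n + 1) = (v ++ ones c) ++ stage v a n := by
    intro n
    have hst : stage v a (n + 1) = stage v a n ++ ones (a n) ++ v := rfl
    rw [hst, hc n]
    calc stage v a n ++ ones c ++ v = stage v a n ++ (ones c ++ v) := by
          simp [List.append_assoc]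
      _ = v ++ (ones c ++ stage v a n) := hsw' n
      _ = (v ++ ones c) ++ stage v a n := by simp [List.append_assoc]
  have hvpos : 0 < v.length := List.length_pos_iff.mpr hv
  refine ⟨v.length + c, by omega, ?_⟩
  intro i
  set n := i + c + 1 with hn
  have hlen1 : v.length + n ≤ (stage v a n).length := stage_length hv n
  have hlen2 : (stage v a (n+1)).length = (v.length + c) + (stage v a n).length := by
    rw [hsw n]; simp [ones]; omega
  have hi1 : i + (v.length + c) < (stage v a (n+1)).length := by omega
  have hi2 : i < (stage v a n).length := by omega
  have e1 : V (i + (v.length + c)) = (stage v a (n+1)).getD (i + (v.length + c)) false :=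
    (hpre (n+1) _ hi1).symm
  have e2 : (stage v a (n+1)).getD (i + (v.length + c)) false
      = (stage v a n).getD i false := by
    rw [hsw n]
    have hL : (v ++ ones c).length = v.length + c := by simp [ones]
    rw [List.getD_append_right _ _ _ _ (by omega : (v ++ ones c).length ≤ i + (v.length + c))]
    congr 1
    omega
  have e3 : (stage v a n).getD i false = V i := hpre n i hi2
  rw [e1, e2, e3]

end Stmt11Aux

open Stmt11Aux in
theorem stmt11 (V : ℕ → Bool) (h1 : (AV V).Infinite)
    (h2 : ¬ ∃ p > 0, ∀ i, V (i + p) = V i) :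
    Perfect (Subshift V) := by
  classical
  refine ⟨subshift_closed V, ?_⟩
  intro x hx
  rw [accPt_iff_nhds]
  intro U hU
  rw [nhds_pi] at hU
  obtain ⟨I, hIfin, s, hs, hsub⟩ := (Filter.mem_pi).mp hU
  obtain ⟨N, hN⟩ := (hIfin.image Int.natAbs).bddAbove
  have hcyl : ∀ y : ℤ → Bool, (∀ i : ℤ, i.natAbs ≤ N → y i = x i) → y ∈ U := by
    intro y hy
    apply hsub
    intro i hiI
    have : y i = x i := hy i (hN (Set.mem_image_of_mem _ hiI))
    rw [this]
    exact mem_of_mem_nhds (hs i)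
  -- the window word
  set w : List Bool := (List.range (2*N+1)).map (fun t : ℕ => x ((t:ℤ) - N)) with hw
  have hwlen : w.length = 2*N+1 := by rw [hw]; simp
  have hwget : ∀ t, t < 2*N+1 → w.getD t false = x ((t:ℤ) - N) := by
    intro t ht
    rw [hw]
    simp [List.getD_eq_getElem?_getD, ht]
  have hwx : OccursAtZ w x (-(N:ℤ)) := by
    intro i hi
    have hi' : i < 2*N+1 := by omega
    rw [hwget i hi']
    congr 1
    omega
  obtain ⟨k, hk⟩ : FactorOfN w V := hx w ⟨-(N:ℤ), hwx⟩
  -- a long word from A_V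
  obtain ⟨v, hvA, hvlen⟩ := long_mem h1 (k + w.length)
  obtain ⟨hvF, a, hpre⟩ := hvA
  have hvne : v ≠ [] := inF_ne_nil hvF
  have hvpos : 0 < v.length := List.length_pos_iff.mpr hvne
  -- the exponent sequence is not constant
  have hnc : ¬ ∀ n, a n = a 0 := fun hcon => h2 (const_periodic hvne hpre hcon)
  push_neg at hnc
  obtain ⟨n₁, hne⟩ := hnc
  obtain ⟨nb, nb', hbb⟩ : ∃ p q : ℕ, a p < a q := by
    rcases Nat.lt_or_ge (a n₁) (a 0) with h | h
    · exact ⟨n₁, 0, h⟩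
    · exact ⟨0, n₁, by omega⟩
  -- the words v 1^{a n} v are factors of V
  have hWfac : ∀ n : ℕ, FactorOfN (v ++ (ones (a n) ++ v)) V := by
    intro n
    obtain ⟨u, hu⟩ := stage_eq_append v a n
    refine ⟨u.length, occursAt_of_prefix (s := []) (hpre (n+1)) ?_⟩
    have hst : stage v a (n+1) = stage v a n ++ ones (a n) ++ v := rfl
    rw [hst, hu]
    simp [List.append_assoc]
  have hWlen : ∀ n : ℕ, (v ++ (ones (a n) ++ v)).length = v.length + (a n + v.length) := by
    intro n; simp [ones]
  -- two points of the subshift containing these words around the window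
  obtain ⟨y1, hy1X, hy1occ⟩ :=
    exists_point V _ (occurs_far h1 (hWfac nb)) (-(N:ℤ) - k)
  obtain ⟨y2, hy2X, hy2occ⟩ :=
    exists_point V _ (occurs_far h1 (hWfac nb')) (-(N:ℤ) - k)
  -- both agree with x on the window
  have hagree : ∀ (y : ℤ → Bool) (e : ℕ), OccursAtZ (v ++ (ones e ++ v)) y (-(N:ℤ) - k) →
      ∀ i : ℤ, i.natAbs ≤ N → y i = x i := by
    intro y e hye i hi
    set t : ℕ := (i + N).toNat with htdef
    have ht1 : t < 2*N+1 := by omega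
    have ht2 : i = -(N:ℤ) + t := by omega
    have htw : t < w.length := by omega
    have hklen : k + t < (v ++ (ones e ++ v)).length := by
      have : (v ++ (ones e ++ v)).length = v.length + (e + v.length) := by simp [ones]
      omega
    have e0 : (v ++ (ones e ++ v)).getD (k + t) false = y (-(N:ℤ) - k + ((k + t : ℕ) : ℤ)) :=
      hye (k + t) hklen
    have e1 : (v ++ (ones e ++ v)).getD (k + t) false = v.getD (k + t) false :=
      List.getD_append _ _ _ _ (by omega)
    have hpv : PrefixOf v V := hpre 0
    have e2 : v.getD (k + t) false = V (k + t) := hpv (k + t) (by omega)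
    have e3 : w.getD t false = V (k + t) := hk t htw
    have e4 : w.getD t false = x ((t:ℤ) - N) := hwget t ht1
    have e5 : y (-(N:ℤ) - k + ((k + t : ℕ) : ℤ)) = y i := by
      congr 1
      push_cast
      omega
    have e6 : x ((t:ℤ) - N) = x i := by
      congr 1
      omega
    rw [← e5, ← e0, e1, e2, ← e3, e4, e6]
  -- they differ at a specific position
  set d : ℤ := -(N:ℤ) - k + ((v.length + a nb : ℕ) : ℤ) with hd
  have hd1 : y1 d = false := by
    have hlt : v.length + a nb < (v ++ (ones (a nb) ++ v)).length := by
      rw [hWlen nb]; omega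
    have := hy1occ (v.length + a nb) hlt
    rw [← this]
    rw [List.getD_append_right _ _ _ _ (by omega : v.length ≤ v.length + a nb)]
    rw [Nat.add_sub_cancel_left]
    rw [List.getD_append_right _ _ _ _ (by simp [ones] : (ones (a nb)).length ≤ a nb)]
    have : a nb - (ones (a nb)).length = 0 := by simp [ones]
    rw [this]
    exact inF_head hvF
  have hd2 : y2 d = true := by
    have hlt : v.length + a nb < (v ++ (ones (a nb') ++ v)).length := by
      rw [hWlen nb']; omega
    have := hy2occ (v.length + a nb) hlt
    rw [← this]
    rw [List.getD_append_right _ _ _ _ (by omega : v.length ≤ v.length + a nb)]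
    rw [Nat.add_sub_cancel_left]
    rw [List.getD_append _ _ _ _ (by simp [ones]; omega : a nb < (ones (a nb')).length)]
    rw [List.getD_eq_getElem _ _ (by simp [ones]; omega : a nb < (ones (a nb')).length)]
    simp [ones]
  -- conclude
  by_cases hxe : y1 = x
  · refine ⟨y2, ⟨hcyl y2 (hagree y2 (a nb') hy2occ), hy2X⟩, ?_⟩
    intro hcontra
    rw [← hxe] at hcontra
    rw [hcontra] at hd2
    rw [hd1] at hd2
    exact Bool.noConfusion hd2
  · exact ⟨y1, ⟨hcyl y1 (hagree y1 (a nb) hy1occ), hy1X⟩, hxe⟩
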